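/- Let L₊ := span{Û^N(b₀,b₀) : N ∈ ℤ} and L₋ := span{Û^N(b₀,−b₀) : N ∈ ℤ}. Then {x,y} = 0 for all x in the closure of L₊ and y in the closure of L₋; {x,x} is a positive real number for every nonzero x in the closure of L₊; {x,x} is a negative real number for every nonzero x in the closure of L₋; and the closure of L₊ intersects the closure of L₋ only in {0}. -/

import Mathlib

noncomputable section

/-- `Hsp` is the complex Hilbert space `ℓ²(ℤ)` of square-summable bilateral
complex sequences. -/
abbrev Hsp : Type := lp (fun _ : ℤ => ℂ) 2

/-- `e n` is the standard orthonormal basis vector `b_n` (indicator sequence of `n`). -/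
noncomputable def e (n : ℤ) : Hsp := lp.single 2 n 1

/-- The indefinite inner product `{(x,y),(x',y')} := ⟨x,y'⟩ + ⟨y,x'⟩` on `Hsp × Hsp`. -/
def indef (p q : Hsp × Hsp) : ℂ :=
  (inner ℂ p.1 q.2 : ℂ) + (inner ℂ p.2 q.1 : ℂ)

lemma e_apply (n m : ℤ) : (e n : ∀ _ : ℤ, ℂ) m = if m = n then 1 else 0 := by
  rw [e, lp.single_apply]
  split_ifs with h
  · subst h; simp
  · simp [Pi.single_apply, h]

lemma inner_e_left (n : ℤ) (f : Hsp) : (inner ℂ (e n) f : ℂ) = (f : ∀ _ : ℤ, ℂ) n := by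
  rw [e, lp.inner_single_left]
  simp [RCLike.inner_apply]

lemma coef_mul (a b c : ℂ) (hb : b ≠ 0) : (b / c) * (a / b) = a / c := by
  rw [mul_comm, div_mul_div_comm, mul_comm a b, mul_div_mul_left _ _ hb]

lemma aux_pow (w : ℤ → ℂ) (hw : ∀ n, w n ≠ 0) (V : Hsp ≃L[ℂ] Hsp)
    (hV : ∀ n : ℤ, V (e n) = (w (n + 1) / w n) • e (n + 1)) :
    ∀ N : ℤ, (V ^ N) (e 0) = (w N / w 0) • e N := by
  have hVinv : ∀ m : ℤ, V⁻¹ (e m) = (w m / w (m - 1))⁻¹ • e (m - 1) := by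
    intro m
    have h := hV (m - 1)
    have e1 : m - 1 + 1 = m := by ring
    rw [e1] at h
    have h2 : e (m - 1) = (w m / w (m - 1)) • V.symm (e m) := by
      conv_lhs => rw [← V.symm_apply_apply (e (m - 1)), h]
      rw [map_smul]
    show V.symm (e m) = _
    rw [h2, smul_smul, inv_mul_cancel₀ (div_ne_zero (hw m) (hw (m - 1))), one_smul]
  intro N
  induction N using Int.induction_on with
  | zero => rw [zpow_zero, div_self (hw 0), one_smul]; rfl
  | succ n ih =>
      have hmul : (V ^ ((n : ℤ) + 1)) (e 0) = V ((V ^ (n : ℤ)) (e 0)) := by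
        rw [show ((n : ℤ) + 1) = 1 + n by ring, zpow_add, zpow_one]; rfl
      rw [hmul, ih, map_smul, hV, smul_smul, coef_mul _ _ _ (hw _)]
  | pred n ih =>
      have hmul : (V ^ (-(n : ℤ) - 1)) (e 0) = V⁻¹ ((V ^ (-(n : ℤ))) (e 0)) := by
        rw [show (-(n : ℤ) - 1) = -1 + -n by ring, zpow_add, zpow_neg_one]; rfl
      rw [hmul, ih, map_smul, hVinv, smul_smul, inv_div, coef_mul _ _ _ (hw _)]

lemma adjoint_e (u : ℤ → ℂ) (U Ustar : Hsp ≃L[ℂ] Hsp)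
    (hU : ∀ n : ℤ, U (e n) = (u (n + 1) / u n) • e (n + 1))
    (hUstar : (Ustar : Hsp →L[ℂ] Hsp) = ContinuousLinearMap.adjoint (U : Hsp →L[ℂ] Hsp)) :
    ∀ n : ℤ, Ustar (e n) = (starRingEnd ℂ) (u n / u (n - 1)) • e (n - 1) := by
  intro n
  apply lp.ext; funext m
  have h1 : Ustar (e n) = ContinuousLinearMap.adjoint (U : Hsp →L[ℂ] Hsp) (e n) := by
    rw [← hUstar]; rfl
  have hL : ((Ustar (e n)) : ∀ _ : ℤ, ℂ) m
      = (starRingEnd ℂ) (u (m + 1) / u m) * (if m + 1 = n then 1 else 0) := by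
    rw [← inner_e_left m (Ustar (e n)), h1, ContinuousLinearMap.adjoint_inner_right]
    have h2 : (U : Hsp →L[ℂ] Hsp) (e m) = (u (m + 1) / u m) • e (m + 1) := hU m
    rw [h2, inner_smul_left, inner_e_left, e_apply]
  rw [hL]
  show _ = ((starRingEnd ℂ) (u n / u (n - 1)) • e (n - 1) : Hsp) m
  rw [lp.coeFn_smul, Pi.smul_apply, e_apply, smul_eq_mul]
  by_cases hm : m + 1 = n
  · obtain rfl : n = m + 1 := hm.symm
    rw [if_pos rfl, if_pos (by omega), mul_one, mul_one, add_sub_cancel_right]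
  · rw [if_neg hm, if_neg (by omega), mul_zero, mul_zero]

lemma aux_closed (c : ℤ → ℂ) (v : ℤ → Hsp × Hsp)
    (hv : ∀ M N : ℤ, ((v M).1 : ∀ _ : ℤ, ℂ) N = c N * ((v M).2 : ∀ _ : ℤ, ℂ) N) :
    ∀ p ∈ closure ((Submodule.span ℂ (Set.range v) : Submodule ℂ (Hsp × Hsp)) :
        Set (Hsp × Hsp)),
      ∀ N : ℤ, (p.1 : ∀ _ : ℤ, ℂ) N = c N * (p.2 : ∀ _ : ℤ, ℂ) N := by
  set φ : ℤ → (Hsp × Hsp) →L[ℂ] ℂ := fun N =>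
    (innerSL ℂ (e N)).comp (ContinuousLinearMap.fst ℂ Hsp Hsp)
      - c N • (innerSL ℂ (e N)).comp (ContinuousLinearMap.snd ℂ Hsp Hsp) with hφdef
  have hφ : ∀ (N : ℤ) (p : Hsp × Hsp),
      φ N p = (p.1 : ∀ _ : ℤ, ℂ) N - c N * (p.2 : ∀ _ : ℤ, ℂ) N := by
    intro N p
    simp only [hφdef, ContinuousLinearMap.sub_apply, ContinuousLinearMap.smul_apply,
      ContinuousLinearMap.comp_apply, ContinuousLinearMap.coe_fst',
      ContinuousLinearMap.coe_snd', innerSL_apply_apply, inner_e_left, smul_eq_mul]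
  have hK : IsClosed {p : Hsp × Hsp | ∀ N, φ N p = 0} := by
    have heq : {p : Hsp × Hsp | ∀ N, φ N p = 0} = ⋂ N, (φ N) ⁻¹' {0} := by
      ext p; simp
    rw [heq]
    exact isClosed_iInter fun N => isClosed_singleton.preimage (φ N).continuous
  have hsub : ((Submodule.span ℂ (Set.range v) : Submodule ℂ (Hsp × Hsp)) :
      Set (Hsp × Hsp)) ⊆ {p | ∀ N, φ N p = 0} := by
    intro p hp N
    have hle : Submodule.span ℂ (Set.range v) ≤ LinearMap.ker (φ N : (Hsp × Hsp) →ₗ[ℂ] ℂ) := by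
      rw [Submodule.span_le]
      rintro _ ⟨M, rfl⟩
      rw [SetLike.mem_coe, LinearMap.mem_ker, ContinuousLinearMap.coe_coe]
      rw [hφ, hv M N, sub_self]
    exact LinearMap.mem_ker.mp (hle hp)
  intro p hp N
  have h0 := closure_minimal hsub hK hp N
  rw [hφ] at h0
  exact sub_eq_zero.mp h0

/-- With `L₊ := span{Û^N(b₀,b₀) : N ∈ ℤ}` and `L₋ := span{Û^N(b₀,−b₀) : N ∈ ℤ}`,
where `Û^N(b₀,±b₀) = (U^N b₀, ±(U*)^{-N} b₀)`:
`{x,y} = 0` for all `x` in the closure of `L₊` and `y` in the closure of `L₋`;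
`{x,x}` is a positive real for every nonzero `x` in the closure of `L₊`;
`{x,x}` is a negative real for every nonzero `x` in the closure of `L₋`;
and the closures of `L₊` and `L₋` intersect only in `{0}`. -/
theorem stmt17 (u : ℤ → ℂ) (hu : ∀ n : ℤ, u n ≠ 0)
    (hbdd : BddAbove (Set.range fun n : ℤ => ‖u (n + 1) / u n‖))
    (hinf : ∃ δ : ℝ, 0 < δ ∧ ∀ n : ℤ, δ ≤ ‖u (n + 1) / u n‖)
    (U Ustar : Hsp ≃L[ℂ] Hsp)
    (hU : ∀ n : ℤ, U (e n) = (u (n + 1) / u n) • e (n + 1))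
    (hUstar : (Ustar : Hsp →L[ℂ] Hsp) = ContinuousLinearMap.adjoint (U : Hsp →L[ℂ] Hsp))
    (Lp Lm : Submodule ℂ (Hsp × Hsp))
    (hLp : Lp = Submodule.span ℂ
      (Set.range fun N : ℤ => (((U ^ N) (e 0), (Ustar ^ (-N)) (e 0)) : Hsp × Hsp)))
    (hLm : Lm = Submodule.span ℂ
      (Set.range fun N : ℤ => (((U ^ N) (e 0), -(Ustar ^ (-N)) (e 0)) : Hsp × Hsp))) :
    (∀ x ∈ closure (Lp : Set (Hsp × Hsp)), ∀ y ∈ closure (Lm : Set (Hsp × Hsp)),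
      indef x y = 0) ∧
    (∀ x ∈ closure (Lp : Set (Hsp × Hsp)), x ≠ 0 →
      ∃ r : ℝ, 0 < r ∧ indef x x = (r : ℂ)) ∧
    (∀ x ∈ closure (Lm : Set (Hsp × Hsp)), x ≠ 0 →
      ∃ r : ℝ, r < 0 ∧ indef x x = (r : ℂ)) ∧
    closure (Lp : Set (Hsp × Hsp)) ∩ closure (Lm : Set (Hsp × Hsp)) = {0} := by
  have hpowU : ∀ N : ℤ, (U ^ N) (e 0) = (u N / u 0) • e N := aux_pow u hu U hU
  have hstar := adjoint_e u U Ustar hU hUstar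
  set w : ℤ → ℂ := fun n => ((starRingEnd ℂ) (u n))⁻¹ with hwdef
  have hw : ∀ n, w n ≠ 0 := fun n => inv_ne_zero (by simpa using hu n)
  have hVst : ∀ n : ℤ, (Ustar⁻¹) (e n) = (w (n + 1) / w n) • e (n + 1) := by
    intro n
    have h := hstar (n + 1)
    rw [add_sub_cancel_right] at h
    have h2 := congrArg Ustar.symm h
    rw [Ustar.symm_apply_apply, map_smul] at h2
    have hC : (starRingEnd ℂ) (u (n + 1) / u n) ≠ 0 := by
      simpa using div_ne_zero (hu (n + 1)) (hu n)
    have hcoef : w (n + 1) / w n = ((starRingEnd ℂ) (u (n + 1) / u n))⁻¹ := by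
      simp only [hwdef, map_div₀]
      rw [div_eq_mul_inv, inv_inv, inv_div, inv_mul_eq_div]
    show Ustar.symm (e n) = _
    rw [hcoef, h2, smul_smul, inv_mul_cancel₀ hC, one_smul]
  have hpowst : ∀ N : ℤ, (Ustar ^ (-N)) (e 0) = (w N / w 0) • e N := by
    intro N
    rw [zpow_neg, ← inv_zpow]
    exact aux_pow w hw Ustar⁻¹ hVst N
  set t : ℤ → ℝ := fun N => ‖u N / u 0‖ ^ 2 with htdef
  have ht : ∀ N, 0 < t N := fun N =>
    pow_pos (norm_pos_iff.mpr (div_ne_zero (hu N) (hu 0))) 2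
  have hkey : ∀ N : ℤ, (u N / u 0) = ((t N : ℝ) : ℂ) * (w N / w 0) := by
    intro N
    have hne : (starRingEnd ℂ) (u N / u 0) ≠ 0 := by
      simpa using div_ne_zero (hu N) (hu 0)
    have h1 : w N / w 0 = ((starRingEnd ℂ) (u N / u 0))⁻¹ := by
      simp only [hwdef, map_div₀]
      rw [div_eq_mul_inv, inv_inv, inv_div, inv_mul_eq_div]
    have h2 : ((t N : ℝ) : ℂ) = (starRingEnd ℂ) (u N / u 0) * (u N / u 0) := by
      rw [RCLike.conj_mul, htdef]
      push_cast
      rfl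
    rw [h1, h2, mul_comm ((starRingEnd ℂ) (u N / u 0)), mul_assoc,
      mul_inv_cancel₀ hne, mul_one]
  -- coordinate characterizations of the closures
  have hP : ∀ p ∈ closure (Lp : Set (Hsp × Hsp)), ∀ N : ℤ,
      (p.1 : ∀ _ : ℤ, ℂ) N = ((t N : ℝ) : ℂ) * (p.2 : ∀ _ : ℤ, ℂ) N := by
    rw [hLp]
    apply aux_closed
    intro M N
    dsimp only
    rw [hpowU M, hpowst M, lp.coeFn_smul, Pi.smul_apply, lp.coeFn_smul, Pi.smul_apply,
      e_apply, smul_eq_mul, smul_eq_mul]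
    by_cases h : N = M
    · subst h; rw [if_pos rfl, mul_one, mul_one, hkey]
    · rw [if_neg h, mul_zero, mul_zero, mul_zero]
  have hM : ∀ p ∈ closure (Lm : Set (Hsp × Hsp)), ∀ N : ℤ,
      (p.1 : ∀ _ : ℤ, ℂ) N = -((t N : ℝ) : ℂ) * (p.2 : ∀ _ : ℤ, ℂ) N := by
    rw [hLm]
    apply aux_closed
    intro M N
    dsimp only
    rw [hpowU M, hpowst M, lp.coeFn_smul, Pi.smul_apply, lp.coeFn_neg, Pi.neg_apply,
      lp.coeFn_smul, Pi.smul_apply, e_apply, smul_eq_mul, smul_eq_mul]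
    by_cases h : N = M
    · subst h; rw [if_pos rfl, mul_one, mul_one, hkey]; ring
    · rw [if_neg h]
      simp
  -- part 1: orthogonality
  have part1 : ∀ p ∈ closure (Lp : Set (Hsp × Hsp)), ∀ q ∈ closure (Lm : Set (Hsp × Hsp)),
      indef p q = 0 := by
    intro p hp q hq
    have h1 := hP p hp
    have h2 := hM q hq
    rw [indef, lp.inner_eq_tsum, lp.inner_eq_tsum]
    have heq : (fun N => (inner ℂ ((p.2 : ∀ _ : ℤ, ℂ) N) ((q.1 : ∀ _ : ℤ, ℂ) N) : ℂ))
        = fun N => -(inner ℂ ((p.1 : ∀ _ : ℤ, ℂ) N) ((q.2 : ∀ _ : ℤ, ℂ) N) : ℂ) := by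
      funext N
      rw [RCLike.inner_apply', RCLike.inner_apply', h1 N, h2 N, map_mul, Complex.conj_ofReal]
      ring
    rw [heq, tsum_neg, add_neg_cancel]
  -- nondegeneracy helper
  have hnz : ∀ (p : Hsp × Hsp), p ≠ 0 →
      (∀ N : ℤ, ∃ c : ℂ, (p.1 : ∀ _ : ℤ, ℂ) N = c * (p.2 : ∀ _ : ℤ, ℂ) N) →
      ∃ N : ℤ, (p.2 : ∀ _ : ℤ, ℂ) N ≠ 0 := by
    intro p hne hc
    by_contra hall
    push_neg at hall
    apply hne
    have hy : p.2 = 0 := lp.ext (funext fun N => by simpa using hall N)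
    have hx : p.1 = 0 := lp.ext (funext fun N => by
      obtain ⟨c, hcN⟩ := hc N
      rw [hcN, hall N, mul_zero]; rfl)
    exact Prod.ext hx hy
  -- part 2: positivity on closure Lp
  have part2 : ∀ p ∈ closure (Lp : Set (Hsp × Hsp)), p ≠ 0 →
      ∃ r : ℝ, 0 < r ∧ indef p p = (r : ℂ) := by
    intro p hp hne
    have h1 := hP p hp
    obtain ⟨N₀, hN₀⟩ := hnz p hne fun N => ⟨((t N : ℝ) : ℂ), h1 N⟩
    set f : ℤ → ℝ := fun N => t N * ‖(p.2 : ∀ _ : ℤ, ℂ) N‖ ^ 2 with hfdef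
    have hterm : ∀ N, (inner ℂ ((p.1 : ∀ _ : ℤ, ℂ) N) ((p.2 : ∀ _ : ℤ, ℂ) N) : ℂ)
        = ((f N : ℝ) : ℂ) := by
      intro N
      rw [RCLike.inner_apply', h1 N, map_mul, Complex.conj_ofReal, mul_assoc, RCLike.conj_mul,
        hfdef]
      push_cast
      rfl
    have hsum : Summable f := by
      have hs := lp.summable_inner (𝕜 := ℂ) p.1 p.2
      rw [show (fun i => (inner ℂ ((p.1 : ∀ _ : ℤ, ℂ) i) ((p.2 : ∀ _ : ℤ, ℂ) i) : ℂ))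
          = fun i => ((f i : ℝ) : ℂ) from funext hterm] at hs
      exact Complex.summable_ofReal.mp hs
    have hip : (inner ℂ p.1 p.2 : ℂ) = ((∑' N, f N : ℝ) : ℂ) := by
      rw [lp.inner_eq_tsum, Complex.ofReal_tsum]
      exact tsum_congr hterm
    have h21 : (inner ℂ p.2 p.1 : ℂ) = ((∑' N, f N : ℝ) : ℂ) := by
      rw [← inner_conj_symm, hip, Complex.conj_ofReal]
    refine ⟨2 * ∑' N, f N, ?_, ?_⟩
    · have hpos := Summable.tsum_pos hsum (fun N => mul_nonneg (ht N).le (sq_nonneg _)) N₀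
        (mul_pos (ht N₀) (pow_pos (norm_pos_iff.mpr hN₀) 2))
      linarith
    · rw [indef, hip, h21]
      push_cast
      ring
  -- part 3: negativity on closure Lm
  have part3 : ∀ p ∈ closure (Lm : Set (Hsp × Hsp)), p ≠ 0 →
      ∃ r : ℝ, r < 0 ∧ indef p p = (r : ℂ) := by
    intro p hp hne
    have h1 := hM p hp
    obtain ⟨N₀, hN₀⟩ := hnz p hne fun N => ⟨-((t N : ℝ) : ℂ), h1 N⟩
    set f : ℤ → ℝ := fun N => t N * ‖(p.2 : ∀ _ : ℤ, ℂ) N‖ ^ 2 with hfdef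
    have hterm : ∀ N, (inner ℂ ((p.1 : ∀ _ : ℤ, ℂ) N) ((p.2 : ∀ _ : ℤ, ℂ) N) : ℂ)
        = ((-(f N) : ℝ) : ℂ) := by
      intro N
      rw [RCLike.inner_apply', h1 N, hfdef]
      rw [show (-((t N : ℝ) : ℂ) * (p.2 : ∀ _ : ℤ, ℂ) N)
          = -(((t N : ℝ) : ℂ) * (p.2 : ∀ _ : ℤ, ℂ) N) by ring, map_neg, map_mul,
        Complex.conj_ofReal]
      rw [show (-(((t N : ℝ) : ℂ) * (starRingEnd ℂ) ((p.2 : ∀ _ : ℤ, ℂ) N))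
          * (p.2 : ∀ _ : ℤ, ℂ) N)
          = -(((t N : ℝ) : ℂ) * ((starRingEnd ℂ) ((p.2 : ∀ _ : ℤ, ℂ) N)
            * (p.2 : ∀ _ : ℤ, ℂ) N)) by ring, RCLike.conj_mul]
      push_cast
      rfl
    have hsum : Summable f := by
      have hs := lp.summable_inner (𝕜 := ℂ) p.1 p.2
      rw [show (fun i => (inner ℂ ((p.1 : ∀ _ : ℤ, ℂ) i) ((p.2 : ∀ _ : ℤ, ℂ) i) : ℂ))
          = fun i => ((-(f i) : ℝ) : ℂ) from funext hterm] at hs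
      have := Complex.summable_ofReal.mp hs
      simpa using this.neg
    have hip : (inner ℂ p.1 p.2 : ℂ) = ((∑' N, -(f N) : ℝ) : ℂ) := by
      rw [lp.inner_eq_tsum, Complex.ofReal_tsum]
      exact tsum_congr hterm
    have h21 : (inner ℂ p.2 p.1 : ℂ) = ((∑' N, -(f N) : ℝ) : ℂ) := by
      rw [← inner_conj_symm, hip, Complex.conj_ofReal]
    refine ⟨2 * ∑' N, -(f N), ?_, ?_⟩
    · have hpos := Summable.tsum_pos hsum (fun N => mul_nonneg (ht N).le (sq_nonneg _)) N₀
        (mul_pos (ht N₀) (pow_pos (norm_pos_iff.mpr hN₀) 2))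
      rw [tsum_neg]
      linarith
    · rw [indef, hip, h21]
      push_cast
      ring
  refine ⟨part1, part2, part3, ?_⟩
  ext p
  simp only [Set.mem_inter_iff, Set.mem_singleton_iff]
  constructor
  · rintro ⟨hp, hm⟩
    have h1 := hP p hp
    have h2 := hM p hm
    have hy : p.2 = 0 := by
      apply lp.ext; funext N
      have h3 := (h1 N).symm.trans (h2 N)
      have htne : ((t N : ℝ) : ℂ) ≠ 0 := by
        exact_mod_cast (ht N).ne'
      have : (2 * ((t N : ℝ) : ℂ)) * (p.2 : ∀ _ : ℤ, ℂ) N = 0 := by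
        linear_combination h3
      have h4 := mul_eq_zero.mp this
      rcases h4 with h4 | h4
      · exact absurd h4 (by simpa [htne] using mul_ne_zero two_ne_zero htne)
      · simpa using h4
    have hx : p.1 = 0 := by
      apply lp.ext; funext N
      rw [h1 N]
      have : (p.2 : ∀ _ : ℤ, ℂ) N = 0 := by rw [hy]; rfl
      rw [this, mul_zero]; rfl
    exact Prod.ext hx hy
  · rintro rfl
    exact ⟨subset_closure (Lp.zero_mem), subset_closure (Lm.zero_mem)⟩
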